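/- Let r, p, n be positive integers with p dividing r, and let α ≠ β be integers. If an integer q > 1 divides each of r/p, (n−1)αp − n, and (n−1)βp − n, and gcd(β − α, q) = 1, then q divides gcd(n, p, r/p). -/

import Mathlib

/-- Let `r, p, n` be positive integers with `p ∣ r`, and let `α ≠ β` be
integers. If an integer `q > 1` divides each of `r/p`, `(n-1)αp - n` and `(n-1)βp - n`,
and `gcd(β - α, q) = 1`, then `q` divides `gcd(n, p, r/p)`. -/
theorem dvd_gcd_of_dvd_linear_combinations (r p n : ℕ) (hr : 0 < r) (hp : 0 < p)
    (hn : 0 < n) (hpr : p ∣ r) (α β : ℤ) (hαβ : α ≠ β) (q : ℤ) (hq : 1 < q)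
    (h1 : q ∣ ((r / p : ℕ) : ℤ))
    (h2 : q ∣ ((n : ℤ) - 1) * α * (p : ℤ) - (n : ℤ))
    (h3 : q ∣ ((n : ℤ) - 1) * β * (p : ℤ) - (n : ℤ))
    (h4 : Int.gcd (β - α) q = 1) :
    q ∣ ((Nat.gcd n (Nat.gcd p (r / p)) : ℕ) : ℤ) := by
  have hdiff : q ∣ (α - β) * (((n : ℤ) - 1) * (p : ℤ)) := by
    have := dvd_sub h2 h3
    have heq : (((n : ℤ) - 1) * α * (p : ℤ) - (n : ℤ)) - (((n : ℤ) - 1) * β * (p : ℤ) - (n : ℤ))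
        = (α - β) * (((n : ℤ) - 1) * (p : ℤ)) := by ring
    rwa [heq] at this
  have hcop : IsCoprime q (α - β) := by
    have : IsCoprime (β - α) q := Int.isCoprime_iff_gcd_eq_one.mpr h4
    have := this.symm.neg_right
    rwa [neg_sub] at this
  have hnp : q ∣ ((n : ℤ) - 1) * (p : ℤ) := hcop.dvd_of_dvd_mul_left hdiff
  have hαp : q ∣ ((n : ℤ) - 1) * α * (p : ℤ) := by
    have : q ∣ α * (((n : ℤ) - 1) * (p : ℤ)) := Dvd.dvd.mul_left hnp α
    have heq : α * (((n : ℤ) - 1) * (p : ℤ)) = ((n : ℤ) - 1) * α * (p : ℤ) := by ring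
    rwa [heq] at this
  have hnn : q ∣ (n : ℤ) := by
    have := dvd_sub hαp h2
    simpa using this
  have hpp : q ∣ (p : ℤ) := by
    have h5 : q ∣ (n : ℤ) * (p : ℤ) := hnn.mul_right _
    have := dvd_sub h5 hnp
    have heq : (n : ℤ) * (p : ℤ) - ((n : ℤ) - 1) * (p : ℤ) = (p : ℤ) := by ring
    rwa [heq] at this
  have hinner : q ∣ ((Nat.gcd p (r / p) : ℕ) : ℤ) := by
    have := Int.dvd_coe_gcd hpp h1
    rwa [Int.gcd_natCast_natCast] at this
  have := Int.dvd_coe_gcd hnn hinner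
  rwa [Int.gcd_natCast_natCast] at this
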